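/- Suppose k ≥ 2, r does not divide k−1, and there exists an optimal linear LRC over F_q with parameters (n, k, d, r, δ). Then there exists an optimal linear LRC over F_q with parameters (n−1, k−1, d, r, δ). -/

import Mathlib

/-- A linear locally repairable code (LRC) over a finite field `F` with parameters
`(n, k, d, r, δ)`: a `k`-dimensional subspace `C ⊆ F^n` whose minimum Hamming distance
is exactly `d`, such that every coordinate `j` has a repair set `S` with `j ∈ S`,
`|S| ≤ r + δ - 1`, and the projection of `C` to the coordinates in `S` has minimum
Hamming distance at least `δ`. -/
def IsLinearLRC (F : Type) [Field F] [Fintype F] [DecidableEq F]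
    (n k d r δ : ℕ) : Prop :=
  ∃ C : Submodule F (Fin n → F),
    Module.finrank F ↥C = k ∧
    (∀ c ∈ C, c ≠ 0 → d ≤ hammingNorm c) ∧
    (∃ c ∈ C, c ≠ 0 ∧ hammingNorm c = d) ∧
    (∀ j : Fin n, ∃ S : Finset (Fin n), j ∈ S ∧ S.card ≤ r + δ - 1 ∧
      ∀ c ∈ C, ∀ c' ∈ C, (∃ i ∈ S, c i ≠ c' i) →
        δ ≤ (S.filter (fun i => c i ≠ c' i)).card)

/-- The Singleton-type bound `d_opt(n,k,r,δ) = n - k - (⌈k/r⌉ - 1)(δ - 1) + 1`,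
computed in `ℤ`, where `⌈k/r⌉ = (k + r - 1) / r`. -/
def doptZ (n k r δ : ℕ) : ℤ :=
  (n : ℤ) - k - ((((k + r - 1) / r : ℕ) : ℤ) - 1) * ((δ : ℤ) - 1) + 1


lemma ceil_eq (k r : ℕ) (hr : 1 ≤ r) (hk : 2 ≤ k) (hdvd : ¬ r ∣ (k - 1)) :
    (k - 1 + r - 1) / r = (k + r - 1) / r := by
  obtain ⟨m, rfl⟩ : ∃ m, k = m + 2 := ⟨k - 2, by omega⟩
  have h1 : m + 2 - 1 + r - 1 = m + r := by omega
  have h2 : m + 2 + r - 1 = (m + 1) + r := by omega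
  rw [h1, h2, Nat.add_div_right _ hr, Nat.add_div_right _ hr]
  have := @Nat.succ_div m r
  rw [this, if_neg (by simpa using hdvd)]

-- main construction lemma, with n = m + 1
set_option synthInstance.maxHeartbeats 1000000 in
set_option maxHeartbeats 1000000 in
lemma shorten (F : Type) [Field F] [Fintype F] [DecidableEq F]
    (m k d r δ : ℕ) (hk : 2 ≤ k)
    (h : IsLinearLRC F (m + 1) k d r δ) (hd1 : 1 ≤ d) :
    IsLinearLRC F m (k - 1) d r δ := by
  classical
  obtain ⟨C, hrank, hmin, ⟨cs, hcsC, hcs0, hcsd⟩, hloc⟩ := h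
  -- Step 2: find a good coordinate j
  have hstep2 : ∃ j : Fin (m + 1), cs j = 0 ∧ ∃ c ∈ C, c j ≠ 0 := by
    by_contra hcon
    push_neg at hcon
    -- all codewords vanish wherever cs vanishes
    have hvanish : ∀ c ∈ C, ∀ l, cs l = 0 → c l = 0 := fun c hc l hl => hcon l hl c hc
    -- pick c2 ∈ C outside span {cs}
    have hnle : ¬ (C ≤ Submodule.span F {cs}) := by
      intro hle
      have h1 := Submodule.finrank_mono hle
      rw [hrank, finrank_span_singleton hcs0] at h1
      omega
    obtain ⟨c2, hc2C, hc2ns⟩ := SetLike.not_le_iff_exists.mp hnle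
    obtain ⟨i, hi⟩ := Function.ne_iff.mp hcs0
    simp only [Pi.zero_apply] at hi
    set w : Fin (m + 1) → F := c2 - (c2 i / cs i) • cs with hw
    have hwC : w ∈ C := C.sub_mem hc2C (C.smul_mem _ hcsC)
    have hwi : w i = 0 := by
      simp only [hw, Pi.sub_apply, Pi.smul_apply, smul_eq_mul]
      field_simp
      ring
    have hw0 : w ≠ 0 := by
      intro h0
      apply hc2ns
      have : c2 = (c2 i / cs i) • cs := by
        have := sub_eq_zero.mp h0
        exact this
      rw [this]
      exact Submodule.smul_mem _ _ (Submodule.mem_span_singleton_self cs)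
    have hle := hmin w hwC hw0
    -- weight of w is at most d - 1
    have hsub : (Finset.univ.filter (fun l => w l ≠ 0)) ⊆
        (Finset.univ.filter (fun l => cs l ≠ 0)).erase i := by
      intro l hl
      simp only [Finset.mem_filter, Finset.mem_univ, true_and] at hl
      refine Finset.mem_erase.mpr ⟨?_, ?_⟩
      · rintro rfl; exact hl hwi
      · simp only [Finset.mem_filter, Finset.mem_univ, true_and]
        intro hcl
        exact hl (by
          have := hvanish w hwC l hcl
          exact this)
    have hcard : hammingNorm w ≤ d - 1 := by
      have h2 : ((Finset.univ.filter (fun l => cs l ≠ 0)).erase i).card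
          = hammingNorm cs - 1 := by
        rw [Finset.card_erase_of_mem]
        · rfl
        · simp [hi]
      have := Finset.card_le_card hsub
      rw [h2, hcsd] at this
      simpa [hammingNorm] using this
    omega
  obtain ⟨j, hj0, c0, hc0C, hc0j⟩ := hstep2
  -- the restriction map
  set R : (Fin (m + 1) → F) →ₗ[F] (Fin m → F) := LinearMap.funLeft F F j.succAbove with hR
  set π : (Fin (m + 1) → F) →ₗ[F] F := LinearMap.proj j with hπ
  set D : Submodule F (Fin (m + 1) → F) := C ⊓ LinearMap.ker π with hD
  refine ⟨D.map R, ?_, ?_, ?_, ?_⟩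
  · -- finrank
    -- R is injective on ker π
    have hinj : ∀ c : Fin (m + 1) → F, c j = 0 → R c = 0 → c = 0 := by
      intro c hcj hRc
      funext i
      rcases eq_or_ne i j with rfl | hne
      · exact hcj
      · obtain ⟨l, rfl⟩ := Fin.exists_succAbove_eq hne
        have := congrFun hRc l
        simpa [hR, LinearMap.funLeft] using this
    have hψ : LinearMap.ker (R.domRestrict D) = ⊥ := by
      rw [LinearMap.ker_eq_bot']
      rintro ⟨c, hcC, hck⟩ hc
      have hcj : c j = 0 := by simpa [hπ] using hck
      have : R c = 0 := by simpa using hc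
      exact Subtype.ext (hinj c hcj this)
    have h1 := LinearMap.finrank_range_add_finrank_ker (R.domRestrict D)
    rw [hψ, LinearMap.range_domRestrict] at h1
    -- finrank D = k - 1
    have hφsurj : LinearMap.range (π.domRestrict C) = ⊤ := by
      rw [LinearMap.range_eq_top]
      intro x
      refine ⟨⟨(x / c0 j) • c0, C.smul_mem _ hc0C⟩, ?_⟩
      simp only [LinearMap.domRestrict_apply, hπ, LinearMap.proj_apply, Pi.smul_apply,
        smul_eq_mul]
      field_simp
    have h2 := LinearMap.finrank_range_add_finrank_ker (π.domRestrict C)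
    rw [hφsurj, finrank_top, hrank, Module.finrank_self] at h2
    have hDker : Module.finrank F ↥D = Module.finrank F ↥(LinearMap.ker (π.domRestrict C)) := by
      rw [LinearMap.ker_domRestrict]
      have hle : D ≤ C := inf_le_left
      have e := Submodule.comapSubtypeEquivOfLe hle
      have : Submodule.comap C.subtype D = Submodule.comap C.subtype (LinearMap.ker π) := by
        rw [hD, Submodule.comap_inf, Submodule.comap_subtype_self, top_inf_eq]
      rw [← this]
      exact (LinearEquiv.finrank_eq e).symm
    rw [hDker] at h1
    simp only [finrank_bot, add_zero] at h1
    omega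
  · -- min distance lower bound
    rintro c' hc' hc'0
    obtain ⟨c, hcD, rfl⟩ := hc'
    obtain ⟨hcC, hck⟩ := hcD
    have hcj : c j = 0 := by simpa [hπ] using hck
    have hc0 : c ≠ 0 := by rintro rfl; exact hc'0 (map_zero R)
    have hnorm : hammingNorm (R c) = hammingNorm c := by
      apply Finset.card_bij (fun l _ => j.succAbove l)
      · intro l hl
        simp only [Finset.mem_filter, Finset.mem_univ, true_and] at hl ⊢
        simpa [hR, LinearMap.funLeft] using hl
      · intro a _ b _ hab
        exact Fin.succAbove_right_injective hab
      · intro i hi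
        simp only [Finset.mem_filter, Finset.mem_univ, true_and] at hi
        have hne : i ≠ j := by rintro rfl; exact hi hcj
        obtain ⟨l, rfl⟩ := Fin.exists_succAbove_eq hne
        refine ⟨l, ?_, rfl⟩
        simp only [Finset.mem_filter, Finset.mem_univ, true_and]
        simpa [hR, LinearMap.funLeft] using hi
    rw [hnorm]
    exact hmin c hcC hc0
  · -- word of weight exactly d
    have hcsj : cs j = 0 := hj0
    have hcsD : cs ∈ D := ⟨hcsC, by simpa [hπ] using hcsj⟩
    refine ⟨R cs, Submodule.mem_map_of_mem hcsD, ?_, ?_⟩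
    · intro h0
      have : hammingNorm (R cs) = 0 := by rw [h0]; exact hammingNorm_eq_zero.mpr rfl
      have hnorm : hammingNorm (R cs) = hammingNorm cs := by
        apply Finset.card_bij (fun l _ => j.succAbove l)
        · intro l hl
          simp only [Finset.mem_filter, Finset.mem_univ, true_and] at hl ⊢
          simpa [hR, LinearMap.funLeft] using hl
        · intro a _ b _ hab
          exact Fin.succAbove_right_injective hab
        · intro i hi
          simp only [Finset.mem_filter, Finset.mem_univ, true_and] at hi
          have hne : i ≠ j := by rintro rfl; exact hi hcsj
          obtain ⟨l, rfl⟩ := Fin.exists_succAbove_eq hne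
          refine ⟨l, ?_, rfl⟩
          simp only [Finset.mem_filter, Finset.mem_univ, true_and]
          simpa [hR, LinearMap.funLeft] using hi
      rw [hnorm, hcsd] at this
      omega
    · have hnorm : hammingNorm (R cs) = hammingNorm cs := by
        apply Finset.card_bij (fun l _ => j.succAbove l)
        · intro l hl
          simp only [Finset.mem_filter, Finset.mem_univ, true_and] at hl ⊢
          simpa [hR, LinearMap.funLeft] using hl
        · intro a _ b _ hab
          exact Fin.succAbove_right_injective hab
        · intro i hi
          simp only [Finset.mem_filter, Finset.mem_univ, true_and] at hi
          have hne : i ≠ j := by rintro rfl; exact hi hcsj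
          obtain ⟨l, rfl⟩ := Fin.exists_succAbove_eq hne
          refine ⟨l, ?_, rfl⟩
          simp only [Finset.mem_filter, Finset.mem_univ, true_and]
          simpa [hR, LinearMap.funLeft] using hi
      rw [hnorm, hcsd]
  · -- locality
    intro j'
    obtain ⟨S, hjS, hScard, hSdist⟩ := hloc (j.succAbove j')
    refine ⟨Finset.univ.filter (fun l => j.succAbove l ∈ S), by simp [hjS], ?_, ?_⟩
    · calc (Finset.univ.filter (fun l => j.succAbove l ∈ S)).card
          = ((Finset.univ.filter (fun l => j.succAbove l ∈ S)).image j.succAbove).card := by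
            rw [Finset.card_image_of_injective _ Fin.succAbove_right_injective]
        _ ≤ S.card := Finset.card_le_card (by
            intro i hi
            obtain ⟨l, hl, rfl⟩ := Finset.mem_image.mp hi
            simpa using hl)
        _ ≤ r + δ - 1 := hScard
    · rintro c' hc' e' he' ⟨l, hl, hlne⟩
      obtain ⟨c, ⟨hcC, hck⟩, rfl⟩ := hc'
      obtain ⟨e, ⟨heC, hek⟩, rfl⟩ := he'
      have hcj : c j = 0 := by simpa [hπ] using hck
      have hej : e j = 0 := by simpa [hπ] using hek
      simp only [Finset.mem_filter, Finset.mem_univ, true_and] at hl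
      have hRc : ∀ l : Fin m, R c l = c (j.succAbove l) := fun l => rfl
      have hRe : ∀ l : Fin m, R e l = e (j.succAbove l) := fun l => rfl
      have h1 := hSdist c hcC e heC ⟨j.succAbove l, hl, by rw [← hRc, ← hRe]; exact hlne⟩
      refine h1.trans ?_
      have hsub : (S.filter fun i => c i ≠ e i) ⊆
          ((Finset.univ.filter (fun l => j.succAbove l ∈ S)).filter
            (fun l => R c l ≠ R e l)).image j.succAbove := by
        intro i hi
        simp only [Finset.mem_filter] at hi
        obtain ⟨hiS, hine⟩ := hi
        have hij : i ≠ j := by rintro rfl; exact hine (by rw [hcj, hej])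
        obtain ⟨l', rfl⟩ := Fin.exists_succAbove_eq hij
        refine Finset.mem_image.mpr ⟨l', ?_, rfl⟩
        simp only [Finset.mem_filter, Finset.mem_univ, true_and]
        exact ⟨hiS, by rw [hRc, hRe]; exact hine⟩
      calc (S.filter fun i => c i ≠ e i).card
          ≤ _ := Finset.card_le_card hsub
        _ = _ := Finset.card_image_of_injective _ Fin.succAbove_right_injective

theorem stmt_4 (F : Type) [Field F] [Fintype F] [DecidableEq F]
    (n k d r δ : ℕ) (hr : 1 ≤ r) (hδ : 2 ≤ δ) (hk : 2 ≤ k)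
    (hdvd : ¬ r ∣ (k - 1))
    (h : IsLinearLRC F n k d r δ) (hopt : (d : ℤ) = doptZ n k r δ) :
    IsLinearLRC F (n - 1) (k - 1) d r δ ∧ (d : ℤ) = doptZ (n - 1) (k - 1) r δ := by
  obtain ⟨C, hrank, hmin, ⟨cs, hcsC, hcs0, hcsd⟩, hloc⟩ := h
  have hd1 : 1 ≤ d := by
    rw [← hcsd]
    exact hammingNorm_pos_iff.mpr hcs0
  have hn1 : 1 ≤ n := by
    by_contra hn
    push_neg at hn
    interval_cases n
    exact hcs0 (funext fun i => i.elim0)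
  obtain ⟨m, rfl⟩ : ∃ m, n = m + 1 := ⟨n - 1, by omega⟩
  have hlrc : IsLinearLRC F m (k - 1) d r δ := by
    apply shorten F m k d r δ hk _ hd1
    exact ⟨C, hrank, hmin, ⟨cs, hcsC, hcs0, hcsd⟩, hloc⟩
  have hdopt : doptZ (m + 1 - 1) (k - 1) r δ = doptZ (m + 1) k r δ := by
    simp only [doptZ, Nat.add_sub_cancel]
    rw [ceil_eq k r hr hk hdvd]
    have hkc : ((k - 1 : ℕ) : ℤ) = (k : ℤ) - 1 := by
      have : 1 ≤ k := by omega
      push_cast [this]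
      ring
    rw [hkc]
    push_cast
    ring
  simp only [Nat.add_sub_cancel] at hlrc hdopt ⊢
  exact ⟨hlrc, hopt.trans hdopt.symm⟩
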